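/- Density ratio bound for nearby Laplace distributions: let τ > K > 0, δ > 0, and let τ_e satisfy |τ − τ_e| ≤ K. Let f and f_e be the densities of Lap(τ, δτ) and Lap(τ_e, δτ_e) respectively. Then for all x with 0 ≤ x ≤ 2·max{τ, τ_e}, (1 − K/τ)·exp(−2K/(δ(τ−K))) ≤ f(x)/f_e(x) ≤ (1 + K/τ)·exp(2K/(δ(τ−K))). -/

import Mathlib

set_option maxHeartbeats 1000000 in
/-- Density ratio bound for nearby Laplace distributions: if `τ > K > 0`, `δ > 0`,
`|τ - τₑ| ≤ K`, and `f`, `fₑ` are the densities of `Lap(τ, δτ)` and `Lap(τₑ, δτₑ)`,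
then for all `x ∈ [0, 2 max{τ, τₑ}]`,
`(1 - K/τ)·exp(-2K/(δ(τ-K))) ≤ f(x)/fₑ(x) ≤ (1 + K/τ)·exp(2K/(δ(τ-K)))`. -/
theorem stmt9 (τ τe K δ x : ℝ) (hK : 0 < K) (hKτ : K < τ) (hδ : 0 < δ)
    (hτe : |τ - τe| ≤ K) (hx0 : 0 ≤ x) (hx1 : x ≤ 2 * max τ τe) :
    (1 - K / τ) * Real.exp (-(2 * K) / (δ * (τ - K)))
        ≤ ((1 / (2 * (δ * τ))) * Real.exp (-|x - τ| / (δ * τ))) /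
          ((1 / (2 * (δ * τe))) * Real.exp (-|x - τe| / (δ * τe))) ∧
    ((1 / (2 * (δ * τ))) * Real.exp (-|x - τ| / (δ * τ))) /
          ((1 / (2 * (δ * τe))) * Real.exp (-|x - τe| / (δ * τe)))
        ≤ (1 + K / τ) * Real.exp ((2 * K) / (δ * (τ - K))) := by
  obtain ⟨hab1, hab2⟩ := abs_le.mp hτe
  have hτpos : 0 < τ := hK.trans hKτ
  have hτepos : 0 < τe := by linarith
  have hτK : 0 < τ - K := by linarith
  have hA0 : (0:ℝ) ≤ |x - τ| := abs_nonneg _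
  have hB0 : (0:ℝ) ≤ |x - τe| := abs_nonneg _
  have htri1 : |x - τe| ≤ |x - τ| + K := by
    have := abs_sub_abs_le_abs_sub (x - τe) (x - τ)
    have h2 : |x - τe - (x - τ)| = |τ - τe| := by
      rw [show x - τe - (x - τ) = τ - τe by ring]
    nlinarith [abs_le.mp hτe]
  have htri2 : |x - τ| ≤ |x - τe| + K := by
    have := abs_sub_abs_le_abs_sub (x - τ) (x - τe)
    have h2 : |x - τ - (x - τe)| = |τe - τ| := by
      rw [show x - τ - (x - τe) = τe - τ by ring]
    rw [abs_sub_comm τe τ] at h2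
    nlinarith
  -- key rewriting of the ratio
  have hratio : ((1 / (2 * (δ * τ))) * Real.exp (-|x - τ| / (δ * τ))) /
          ((1 / (2 * (δ * τe))) * Real.exp (-|x - τe| / (δ * τe)))
      = (τe / τ) * Real.exp (-|x - τ| / (δ * τ) - -|x - τe| / (δ * τe)) := by
    rw [Real.exp_sub]
    field_simp
  set E : ℝ := -|x - τ| / (δ * τ) - -|x - τe| / (δ * τe) with hE
  have hEeq : E = |x - τe| / (δ * τe) - |x - τ| / (δ * τ) := by
    rw [hE]; ring
  have hδτ : 0 < δ * τ := mul_pos hδ hτpos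
  have hδτe : 0 < δ * τe := mul_pos hδ hτepos
  have hδτK : 0 < δ * (τ - K) := mul_pos hδ hτK
  -- bounds on E
  have hEupper : E ≤ 2 * K / (δ * (τ - K)) := by
    rw [hEeq, div_sub_div _ _ hδτe.ne' hδτ.ne', div_le_div_iff₀ (mul_pos hδτe hδτ) hδτK]
    have hnum : (|x - τe| * τ - τe * |x - τ|) * (τ - K) ≤ 2 * K * (τe * τ) := by
      rcases le_total τe τ with hc | hc
      · have hxmax : x ≤ 2 * τ := by rwa [max_eq_left hc] at hx1
        have hAτ : |x - τ| ≤ τ := abs_le.mpr ⟨by linarith, by linarith⟩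
        have h1 : |x - τe| * τ - τe * |x - τ| ≤ 2 * τ * K := by
          linarith [mul_le_mul_of_nonneg_right (show τ - K ≤ τe by linarith) hA0,
            mul_le_mul_of_nonneg_left htri1 hτpos.le,
            mul_le_mul_of_nonneg_left hAτ hK.le]
        linarith [mul_le_mul_of_nonneg_right h1 hτK.le,
          mul_le_mul_of_nonneg_left (show τ - K ≤ τe by linarith)
            (by positivity : (0:ℝ) ≤ 2 * τ * K)]
      · have h1 : |x - τe| * τ - τe * |x - τ| ≤ τ * K := by
          nlinarith [mul_le_mul_of_nonneg_left htri1 hτpos.le,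
            mul_nonneg hA0 (by linarith : (0:ℝ) ≤ τe - τ)]
        linarith [mul_le_mul_of_nonneg_right h1 hτK.le,
          mul_le_mul_of_nonneg_left (show τ - K ≤ 2 * τe by linarith)
            (by positivity : (0:ℝ) ≤ τ * K)]
    calc (|x - τe| * (δ * τ) - δ * τe * |x - τ|) * (δ * (τ - K))
        = δ * δ * ((|x - τe| * τ - τe * |x - τ|) * (τ - K)) := by ring
      _ ≤ δ * δ * (2 * K * (τe * τ)) :=
          mul_le_mul_of_nonneg_left hnum (by positivity)
      _ = 2 * K * (δ * τe * (δ * τ)) := by ring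
  have hElower : -(2 * K) / (δ * (τ - K)) ≤ E := by
    rw [hEeq, div_sub_div _ _ hδτe.ne' hδτ.ne',
      div_le_div_iff₀ hδτK (mul_pos hδτe hδτ)]
    have hnum : (τe * |x - τ| - |x - τe| * τ) * (τ - K) ≤ 2 * K * (τe * τ) := by
      rcases le_total τe τ with hc | hc
      · have h1 : τe * |x - τ| - |x - τe| * τ ≤ τe * K := by
          nlinarith [mul_le_mul_of_nonneg_left htri2 hτepos.le,
            mul_nonneg hB0 (by linarith : (0:ℝ) ≤ τ - τe)]
        linarith [mul_le_mul_of_nonneg_right h1 hτK.le,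
          mul_le_mul_of_nonneg_left (show τ - K ≤ 2 * τ by linarith)
            (by positivity : (0:ℝ) ≤ τe * K)]
      · have hxmax : x ≤ 2 * τe := by rwa [max_eq_right hc] at hx1
        have hBτe : |x - τe| ≤ τe := abs_le.mpr ⟨by linarith, by linarith⟩
        have h1 : τe * |x - τ| - |x - τe| * τ ≤ 2 * τe * K := by
          linarith [mul_le_mul_of_nonneg_left htri2 hτepos.le,
            mul_le_mul_of_nonneg_right (show τe - τ ≤ K by linarith) hB0,
            mul_le_mul_of_nonneg_left hBτe hK.le]
        linarith [mul_le_mul_of_nonneg_right h1 hτK.le,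
          mul_le_mul_of_nonneg_left (show τ - K ≤ τ by linarith)
            (by positivity : (0:ℝ) ≤ 2 * τe * K)]
    calc -(2 * K) * (δ * τe * (δ * τ))
        = δ * δ * (-(2 * K * (τe * τ))) := by ring
      _ ≤ δ * δ * (-((τe * |x - τ| - |x - τe| * τ) * (τ - K))) :=
          mul_le_mul_of_nonneg_left (by linarith) (by positivity)
      _ = (|x - τe| * (δ * τ) - δ * τe * |x - τ|) * (δ * (τ - K)) := by ring
  have hfrac1 : 1 - K / τ ≤ τe / τ := by
    rw [le_div_iff₀ hτpos]
    have h : (1 - K / τ) * τ = τ - K := by field_simp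
    rw [h]; linarith
  have hfrac2 : τe / τ ≤ 1 + K / τ := by
    rw [div_le_iff₀ hτpos]
    have h : (1 + K / τ) * τ = τ + K := by field_simp
    rw [h]; linarith
  have hfracnn : (0:ℝ) ≤ 1 - K / τ := by
    have : K / τ ≤ 1 := by rw [div_le_one hτpos]; linarith
    linarith
  constructor
  · rw [hratio]
    have he : Real.exp (-(2 * K) / (δ * (τ - K))) ≤ Real.exp E :=
      Real.exp_le_exp.mpr hElower
    exact mul_le_mul hfrac1 he (Real.exp_pos _).le (by positivity)
  · rw [hratio]
    have he : Real.exp E ≤ Real.exp (2 * K / (δ * (τ - K))) :=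
      Real.exp_le_exp.mpr hEupper
    exact mul_le_mul hfrac2 he (Real.exp_pos _).le (by positivity)
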